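/- With the notation of the CB-NOMA model, the conditional average minimal transmit power satisfies the upper bound E_t[P_min] ≤ P̃_lo(t)·(1 + min(β2/β1, γ2/γ1)). -/

import Mathlib

open MeasureTheory Set

lemma polyExp_integrableOn (n : ℕ) :
    IntegrableOn (fun x : ℝ => x ^ n * Real.exp (-x)) (Ioi 0) := by
  have h := Real.GammaIntegral_convergent (s := (n : ℝ) + 1) (by positivity)
  refine h.congr_fun (fun x hx => ?_) measurableSet_Ioi
  beta_reduce
  rw [add_sub_cancel_right, Real.rpow_natCast, mul_comm]

lemma polyExp_integral (n : ℕ) :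
    ∫ x in Ioi (0:ℝ), x ^ n * Real.exp (-x) = (Nat.factorial n : ℝ) := by
  have h := Real.Gamma_eq_integral (s := (n:ℝ)+1) (by positivity)
  have h2 : Real.Gamma ((n:ℝ)+1) = (Nat.factorial n : ℝ) := by
    exact_mod_cast Real.Gamma_nat_eq_factorial n
  rw [h2] at h
  rw [h]
  exact setIntegral_congr_fun measurableSet_Ioi fun x hx => by
    rw [add_sub_cancel_right, Real.rpow_natCast, mul_comm]

lemma cbnoma_aux (k : ℕ) (β1 β2 γ1 γ2 t : ℝ) (hβ : β2 ≤ β1) (hβ2 : 0 < β2)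
    (hγ1 : 0 < γ1) (hγ2 : 0 < γ2) (ht0 : 0 < t) (ht1 : t < 1)
    (g hf : ℝ → ℝ)
    (hg_nonneg : ∀ x ∈ Ioi (0:ℝ), 0 ≤ g x)
    (hg_int : IntegrableOn g (Ioi (0:ℝ)))
    (hg_total : ∫ x in Ioi (0:ℝ), g x = 1)
    (hgx_int : IntegrableOn (fun x => g x / x) (Ioi (0:ℝ)))
    (hgx_total : ∫ x in Ioi (0:ℝ), g x / x = 1 / ((k:ℝ)+1))
    (hf_nonneg : ∀ z ∈ Ioc t 1, 0 ≤ hf z)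
    (hf_total : ∫ z in Ioc t 1, hf z = 1)
    (hf_cont : ContinuousOn hf (Icc t 1))
    (hfz : ∫ z in Ioc t 1, hf z / z
        = (((k:ℝ)+1) / (1-t)^(k+1)) * ∫ z in t..1, (1-z)^k / z)
    (hJ : (1-t)^(k+1) / ((k:ℝ)+1) ≤ ∫ z in t..1, (1-z)^k / z) :
    (∫ z in t..1, ∫ y in Ioi (0:ℝ), ∫ x in Ioi (0:ℝ),
        (γ1 * (1 + γ2) / (β1 * x) + γ2 / min (β1 * x) (β2 * y * z)) * g x * g y * hf z)
      ≤ (γ1 * (1 + γ2) / (((k:ℝ)+1) * β1)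
          + (γ2 / ((1 - t) ^ (k+1) * β2)) * (∫ z in t..1, (1 - z) ^ k / z))
        * (1 + min (β2 / β1) (γ2 / γ1)) := by
  have hβ1 : 0 < β1 := hβ2.trans_le hβ
  have hk1 : (0:ℝ) < (k:ℝ) + 1 := by positivity
  have h1t : (0:ℝ) < 1 - t := by linarith
  have h1tp : (0:ℝ) < (1 - t) ^ (k+1) := by positivity
  set J := ∫ z in t..1, (1-z)^k / z with hJdef
  have hJpos : 0 < J := lt_of_lt_of_le (by positivity) hJ
  set K := (γ1 * (1 + γ2) + γ2) / β1 with hK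
  have hKpos : 0 < K := by positivity
  -- nonnegativity of the original integrand
  have horig : ∀ z ∈ Ioc t 1, ∀ y ∈ Ioi (0:ℝ), ∀ x ∈ Ioi (0:ℝ),
      0 ≤ (γ1 * (1 + γ2) / (β1 * x) + γ2 / min (β1 * x) (β2 * y * z)) * g x * g y * hf z := by
    intro z hz y hy x hx
    have hx0 : 0 < x := hx
    have hy0 : 0 < y := hy
    have hz0 : 0 < z := ht0.trans hz.1
    have hmin : 0 < min (β1 * x) (β2 * y * z) := lt_min (by positivity) (by positivity)
    have hP : 0 ≤ γ1 * (1 + γ2) / (β1 * x) + γ2 / min (β1 * x) (β2 * y * z) :=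
      add_nonneg (by positivity) (div_nonneg hγ2.le hmin.le)
    exact mul_nonneg (mul_nonneg (mul_nonneg hP (hg_nonneg x hx)) (hg_nonneg y hy))
      (hf_nonneg z hz)
  -- Step 1 : the inner x-integral
  have step1 : ∀ z ∈ Ioc t 1, ∀ y ∈ Ioi (0:ℝ),
      (∫ x in Ioi (0:ℝ),
        (γ1 * (1 + γ2) / (β1 * x) + γ2 / min (β1 * x) (β2 * y * z)) * g x * g y * hf z)
      ≤ (K / ((k:ℝ)+1) + γ2 / (β2 * y * z)) * (g y * hf z) := by
    rintro z hz y hy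
    have hz0 : 0 < z := ht0.trans hz.1
    have hy0 : 0 < y := hy
    have hyz : 0 < β2 * y * z := by positivity
    have hgy : 0 ≤ g y := hg_nonneg y hy
    have hfz0 : 0 ≤ hf z := hf_nonneg z hz
    have hint : Integrable (fun x => (K * (g x / x) + γ2 / (β2 * y * z) * g x) * (g y * hf z))
        (volume.restrict (Ioi (0:ℝ))) :=
      ((hgx_int.const_mul K).add (hg_int.const_mul _)).mul_const _
    have hmono : ∀ x ∈ Ioi (0:ℝ),
        (γ1 * (1 + γ2) / (β1 * x) + γ2 / min (β1 * x) (β2 * y * z)) * g x * g y * hf z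
        ≤ (K * (g x / x) + γ2 / (β2 * y * z) * g x) * (g y * hf z) := by
      intro x hx
      have hx0 : 0 < x := hx
      have hb1x : 0 < β1 * x := by positivity
      have hP : γ1 * (1 + γ2) / (β1 * x) + γ2 / min (β1 * x) (β2 * y * z)
          ≤ K / x + γ2 / (β2 * y * z) := by
        have h1 : γ2 / min (β1 * x) (β2 * y * z) ≤ γ2 / (β1 * x) + γ2 / (β2 * y * z) := by
          rcases min_choice (β1 * x) (β2 * y * z) with h | h <;> rw [h]
          · have : 0 ≤ γ2 / (β2 * y * z) := by positivity
            linarith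
          · have : 0 ≤ γ2 / (β1 * x) := by positivity
            linarith
        have h2 : K / x = γ1 * (1 + γ2) / (β1 * x) + γ2 / (β1 * x) := by
          rw [hK, div_div, add_div]
        linarith
      calc (γ1 * (1 + γ2) / (β1 * x) + γ2 / min (β1 * x) (β2 * y * z)) * g x * g y * hf z
          = (γ1 * (1 + γ2) / (β1 * x) + γ2 / min (β1 * x) (β2 * y * z))
              * (g x * (g y * hf z)) := by ring
        _ ≤ (K / x + γ2 / (β2 * y * z)) * (g x * (g y * hf z)) := by
            apply mul_le_mul_of_nonneg_right hP
            exact mul_nonneg (hg_nonneg x hx) (mul_nonneg hgy hfz0)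
        _ = (K * (g x / x) + γ2 / (β2 * y * z) * g x) * (g y * hf z) := by ring
    have hle := integral_mono_of_nonneg (μ := volume.restrict (Ioi (0:ℝ)))
      (f := fun x => (γ1 * (1 + γ2) / (β1 * x) + γ2 / min (β1 * x) (β2 * y * z))
          * g x * g y * hf z)
      (ae_restrict_of_forall_mem measurableSet_Ioi (horig z hz y hy)) hint
      (ae_restrict_of_forall_mem measurableSet_Ioi hmono)
    refine hle.trans_eq ?_
    rw [integral_mul_const, integral_add (hgx_int.const_mul K) (hg_int.const_mul _),
      integral_const_mul, integral_const_mul, hgx_total, hg_total]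
    ring
  -- Step 2 : the y-integral
  have step2 : ∀ z ∈ Ioc t 1,
      (∫ y in Ioi (0:ℝ), ∫ x in Ioi (0:ℝ),
        (γ1 * (1 + γ2) / (β1 * x) + γ2 / min (β1 * x) (β2 * y * z)) * g x * g y * hf z)
      ≤ (K / ((k:ℝ)+1)) * hf z + (γ2 / (β2 * ((k:ℝ)+1))) * (hf z / z) := by
    rintro z hz
    have hz0 : 0 < z := ht0.trans hz.1
    have hfz0 : 0 ≤ hf z := hf_nonneg z hz
    have hint : Integrable
        (fun y => ((K / ((k:ℝ)+1)) * g y + (γ2 / (β2 * z)) * (g y / y)) * hf z)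
        (volume.restrict (Ioi (0:ℝ))) :=
      ((hg_int.const_mul _).add (hgx_int.const_mul _)).mul_const _
    have hmono : ∀ y ∈ Ioi (0:ℝ),
        (∫ x in Ioi (0:ℝ),
          (γ1 * (1 + γ2) / (β1 * x) + γ2 / min (β1 * x) (β2 * y * z)) * g x * g y * hf z)
        ≤ ((K / ((k:ℝ)+1)) * g y + (γ2 / (β2 * z)) * (g y / y)) * hf z := by
      intro y hy
      have hy0 : 0 < y := hy
      refine (step1 z hz y hy).trans_eq ?_
      have hy' : y ≠ 0 := ne_of_gt hy0
      have hz' : z ≠ 0 := ne_of_gt hz0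
      field_simp
    have hpos : ∀ y ∈ Ioi (0:ℝ),
        0 ≤ ∫ x in Ioi (0:ℝ),
          (γ1 * (1 + γ2) / (β1 * x) + γ2 / min (β1 * x) (β2 * y * z)) * g x * g y * hf z :=
      fun y hy => setIntegral_nonneg measurableSet_Ioi (horig z hz y hy)
    have hle := integral_mono_of_nonneg (μ := volume.restrict (Ioi (0:ℝ)))
      (f := fun y => ∫ x in Ioi (0:ℝ),
        (γ1 * (1 + γ2) / (β1 * x) + γ2 / min (β1 * x) (β2 * y * z)) * g x * g y * hf z)
      (ae_restrict_of_forall_mem measurableSet_Ioi hpos) hint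
      (ae_restrict_of_forall_mem measurableSet_Ioi hmono)
    refine hle.trans_eq ?_
    rw [integral_mul_const, integral_add (hg_int.const_mul _) (hgx_int.const_mul _),
      integral_const_mul, integral_const_mul, hg_total, hgx_total]
    have hz' : z ≠ 0 := ne_of_gt hz0
    field_simp
  -- Step 3 : the z-integral
  rw [intervalIntegral.integral_of_le ht1.le]
  have hcont1 : ContinuousOn (fun z => (K / ((k:ℝ)+1)) * hf z) (Icc t 1) :=
    continuousOn_const.mul hf_cont
  have hcont2 : ContinuousOn (fun z => (γ2 / (β2 * ((k:ℝ)+1))) * (hf z / z)) (Icc t 1) :=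
    continuousOn_const.mul (hf_cont.div continuousOn_id
      (fun z hz => ne_of_gt (lt_of_lt_of_le ht0 hz.1)))
  have hint1 : IntegrableOn (fun z => (K / ((k:ℝ)+1)) * hf z) (Ioc t 1) :=
    (hcont1.integrableOn_Icc).mono_set Ioc_subset_Icc_self
  have hint2 : IntegrableOn (fun z => (γ2 / (β2 * ((k:ℝ)+1))) * (hf z / z)) (Ioc t 1) :=
    (hcont2.integrableOn_Icc).mono_set Ioc_subset_Icc_self
  have hφ_int : Integrable
      (fun z => (K / ((k:ℝ)+1)) * hf z + (γ2 / (β2 * ((k:ℝ)+1))) * (hf z / z))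
      (volume.restrict (Ioc t 1)) := hint1.add hint2
  have hpos3 : ∀ z ∈ Ioc t 1,
      0 ≤ ∫ y in Ioi (0:ℝ), ∫ x in Ioi (0:ℝ),
        (γ1 * (1 + γ2) / (β1 * x) + γ2 / min (β1 * x) (β2 * y * z)) * g x * g y * hf z :=
    fun z hz => setIntegral_nonneg measurableSet_Ioi
      (fun y hy => setIntegral_nonneg measurableSet_Ioi (horig z hz y hy))
  have hle3 := integral_mono_of_nonneg (μ := volume.restrict (Ioc t 1))
    (f := fun z => ∫ y in Ioi (0:ℝ), ∫ x in Ioi (0:ℝ),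
      (γ1 * (1 + γ2) / (β1 * x) + γ2 / min (β1 * x) (β2 * y * z)) * g x * g y * hf z)
    (ae_restrict_of_forall_mem measurableSet_Ioc hpos3) hφ_int
    (ae_restrict_of_forall_mem measurableSet_Ioc step2)
  refine hle3.trans ?_
  have hφval : (∫ z in Ioc t 1,
      ((K / ((k:ℝ)+1)) * hf z + (γ2 / (β2 * ((k:ℝ)+1))) * (hf z / z)))
      = K / ((k:ℝ)+1) + (γ2 / (β2 * ((k:ℝ)+1))) * ((((k:ℝ)+1) / (1-t)^(k+1)) * J) := by
    rw [integral_add hint1 hint2, integral_const_mul, integral_const_mul, hf_total, hfz]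
    ring
  rw [hφval]
  -- final algebra
  have hKsplit : K / ((k:ℝ)+1)
      = γ1 * (1 + γ2) / (((k:ℝ)+1) * β1) + γ2 / (((k:ℝ)+1) * β1) := by
    rw [hK, div_div, mul_comm β1 ((k:ℝ)+1), add_div]
  have hsecond : (γ2 / (β2 * ((k:ℝ)+1))) * ((((k:ℝ)+1) / (1-t)^(k+1)) * J)
      = (γ2 / ((1-t)^(k+1) * β2)) * J := by
    field_simp
  rw [hKsplit, hsecond]
  clear hle3 hφval hφ_int hint1 hint2 hcont1 hcont2 hpos3 step1 step2 horig
    hf_nonneg hf_total hf_cont hfz hg_nonneg hg_int hg_total hgx_int hgx_total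
  set P1 := γ1 * (1 + γ2) / (((k:ℝ)+1) * β1) with hP1def
  set P2 := (γ2 / ((1-t)^(k+1) * β2)) * J with hP2def
  have hP1 : 0 < P1 := by rw [hP1def]; positivity
  have hP2 : 0 < P2 := mul_pos (by positivity) hJpos
  have key : γ2 / (((k:ℝ)+1) * β1) ≤ (P1 + P2) * min (β2 / β1) (γ2 / γ1) := by
    rcases min_choice (β2 / β1) (γ2 / γ1) with h | h <;> rw [h]
    · have hb : 0 < β2 / β1 := by positivity
      have h1 : γ2 / (((k:ℝ)+1) * β1) ≤ P2 * (β2 / β1) := by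
        have he : P2 * (β2 / β1) = (γ2 / ((1-t)^(k+1) * β1)) * J := by
          rw [hP2def]; field_simp
        rw [he]
        have he2 : γ2 / (((k:ℝ)+1) * β1)
            = (γ2 / ((1-t)^(k+1) * β1)) * ((1-t)^(k+1) / ((k:ℝ)+1)) := by
          field_simp
        rw [he2]
        exact mul_le_mul_of_nonneg_left hJ (by positivity)
      calc γ2 / (((k:ℝ)+1) * β1) ≤ P2 * (β2 / β1) := h1
        _ ≤ (P1 + P2) * (β2 / β1) := by
            apply mul_le_mul_of_nonneg_right _ hb.le
            linarith
    · have hg' : 0 < γ2 / γ1 := by positivity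
      have h1 : γ2 / (((k:ℝ)+1) * β1) ≤ P1 * (γ2 / γ1) := by
        have he : P1 * (γ2 / γ1) = γ2 * (1 + γ2) / (((k:ℝ)+1) * β1) := by
          rw [hP1def]; field_simp
        rw [he]
        have hnum : γ2 ≤ γ2 * (1 + γ2) := by nlinarith
        gcongr
      calc γ2 / (((k:ℝ)+1) * β1) ≤ P1 * (γ2 / γ1) := h1
        _ ≤ (P1 + P2) * (γ2 / γ1) := by
            apply mul_le_mul_of_nonneg_right _ hg'.le
            linarith
  have expand : (P1 + P2) * (1 + min (β2 / β1) (γ2 / γ1))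
      = (P1 + P2) + (P1 + P2) * min (β2 / β1) (γ2 / γ1) := by ring
  rw [expand]
  linarith [key]

/-- CB-NOMA upper bound on the conditional average minimal transmit power:
`E_t[P_min] ≤ P̃_lo(t) · (1 + min(β2/β1, γ2/γ1))`. -/
theorem cbnoma_avg_power_upper_bound (M : ℕ) (hM : 2 ≤ M)
    (β1 β2 γ1 γ2 t : ℝ) (hβ : β2 ≤ β1) (hβ2 : 0 < β2)
    (hγ1 : 0 < γ1) (hγ2 : 0 < γ2) (ht0 : 0 < t) (ht1 : t < 1) :
    (∫ z in t..1, ∫ y in Ioi (0 : ℝ), ∫ x in Ioi (0 : ℝ),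
        (γ1 * (1 + γ2) / (β1 * x) + γ2 / min (β1 * x) (β2 * y * z))
          * (x ^ (M - 1) * Real.exp (-x) / (Nat.factorial (M - 1) : ℝ))
          * (y ^ (M - 1) * Real.exp (-y) / (Nat.factorial (M - 1) : ℝ))
          * (((M : ℝ) - 1) * (1 - z) ^ (M - 2) / (1 - t) ^ (M - 1)))
      ≤ (γ1 * (1 + γ2) / (((M : ℝ) - 1) * β1)
          + (γ2 / ((1 - t) ^ (M - 1) * β2)) * (∫ z in t..1, (1 - z) ^ (M - 2) / z))
        * (1 + min (β2 / β1) (γ2 / γ1)) := by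
  obtain ⟨k, rfl⟩ : ∃ k, M = k + 2 := ⟨M - 2, by omega⟩
  have e1 : k + 2 - 1 = k + 1 := by omega
  have e2 : k + 2 - 2 = k := by omega
  have e3 : ((k + 2 : ℕ) : ℝ) - 1 = (k : ℝ) + 1 := by push_cast; ring
  simp only [e1, e2, e3]
  have hfac : (0:ℝ) < (Nat.factorial (k+1) : ℝ) := by
    exact_mod_cast Nat.factorial_pos _
  have hk1 : (0:ℝ) < (k:ℝ) + 1 := by positivity
  have h1t : (0:ℝ) < 1 - t := by linarith
  have hgx_eq : EqOn (fun x : ℝ => x ^ k * Real.exp (-x) / (Nat.factorial (k+1) : ℝ))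
      (fun x : ℝ => (x ^ (k+1) * Real.exp (-x) / (Nat.factorial (k+1) : ℝ)) / x)
      (Ioi 0) := by
    intro x hx
    have hx0 : x ≠ 0 := ne_of_gt hx
    simp only
    rw [pow_succ]
    field_simp
  have hIcompute : ∫ z in t..1, (1 - z) ^ k = (1-t)^(k+1) / ((k:ℝ)+1) := by
    have hc := intervalIntegral.integral_comp_sub_left (a := t) (b := 1)
      (fun u : ℝ => u ^ k) 1
    rw [hc]
    rw [integral_pow]
    norm_num
  refine cbnoma_aux k β1 β2 γ1 γ2 t hβ hβ2 hγ1 hγ2 ht0 ht1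
    (fun x => x ^ (k+1) * Real.exp (-x) / (Nat.factorial (k+1) : ℝ))
    (fun z => ((k:ℝ)+1) * (1 - z) ^ k / (1 - t) ^ (k+1))
    ?_ ?_ ?_ ?_ ?_ ?_ ?_ ?_ ?_ ?_
  · intro x hx
    exact div_nonneg (mul_nonneg (pow_nonneg (le_of_lt hx) _) (Real.exp_pos _).le) hfac.le
  · exact (polyExp_integrableOn (k+1)).div_const _
  · rw [integral_div, polyExp_integral]
    exact div_self hfac.ne'
  · exact IntegrableOn.congr_fun ((polyExp_integrableOn k).div_const _) hgx_eq
      measurableSet_Ioi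
  · rw [← setIntegral_congr_fun measurableSet_Ioi hgx_eq, integral_div, polyExp_integral,
      Nat.factorial_succ]
    push_cast
    have hkf : (Nat.factorial k : ℝ) ≠ 0 := by
      exact_mod_cast (Nat.factorial_pos k).ne'
    field_simp
  · intro z hz
    have h1z : (0:ℝ) ≤ 1 - z := by linarith [hz.2]
    positivity
  · rw [← intervalIntegral.integral_of_le ht1.le]
    have hrw : ∀ z : ℝ, ((k:ℝ)+1) * (1 - z) ^ k / (1 - t) ^ (k+1)
        = (((k:ℝ)+1) / (1 - t) ^ (k+1)) * (1 - z) ^ k := fun z => by ring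
    simp_rw [hrw]
    rw [intervalIntegral.integral_const_mul, hIcompute]
    field_simp
  · exact ((continuous_const.mul ((continuous_const.sub continuous_id).pow k)).div_const
      _).continuousOn
  · rw [← intervalIntegral.integral_of_le ht1.le]
    have hrw : ∀ z : ℝ, (((k:ℝ)+1) * (1 - z) ^ k / (1 - t) ^ (k+1)) / z
        = (((k:ℝ)+1) / (1 - t) ^ (k+1)) * ((1 - z) ^ k / z) := fun z => by ring
    simp_rw [hrw]
    rw [intervalIntegral.integral_const_mul]
  · rw [← hIcompute]
    have hi1 : IntervalIntegrable (fun z : ℝ => (1 - z) ^ k) volume t 1 :=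
      (((continuous_const.sub continuous_id).pow k)).intervalIntegrable t 1
    have hi2 : IntervalIntegrable (fun z : ℝ => (1 - z) ^ k / z) volume t 1 := by
      apply ContinuousOn.intervalIntegrable
      rw [Set.uIcc_of_le ht1.le]
      exact ((continuous_const.sub continuous_id).pow k).continuousOn.div continuousOn_id
        (fun z hz => ne_of_gt (lt_of_lt_of_le ht0 hz.1))
    apply intervalIntegral.integral_mono_on ht1.le hi1 hi2
    intro z hz
    have hz0 : 0 < z := lt_of_lt_of_le ht0 hz.1
    rw [le_div_iff₀ hz0]
    exact mul_le_of_le_one_right (pow_nonneg (by linarith [hz.2]) _) hz.2
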